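/- For f : ℝ × ℝ → ℝ, define the Lorentzian metric g_f on ℝ³ (coordinates (x,y,z)) as the map assigning to each point p = (x,y,z) the symmetric bilinear form on ℝ³ given by g_f(p)(u,v) = −2·f(x,y)·u₁v₁ + u₂v₂ + u₁v₃ + u₃v₁. Let a ≠ 0 be real and f(x,y) = e^{a·y}. Then for every x₀, y₀, z₀ ∈ ℝ and every ε ∈ {1, −1}, the map T : ℝ³ → ℝ³ given by T(x,y,z) = (ε·e^{−a·y₀/2}·x + x₀, y + y₀, ε·e^{a·y₀/2}·z + z₀) is an isometry of g_f: for every p ∈ ℝ³ and all u, v ∈ ℝ³, g_f(T(p))(DT_p u, DT_p v) = g_f(p)(u, v), where DT_p is the Fréchet derivative of T at p. -/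
import Mathlib


/-- The Walker Lorentzian metric on `ℝ³` determined by `f`:
`g_f(p)(u,v) = -2 f(x,y) u₁v₁ + u₂v₂ + u₁v₃ + u₃v₁` at `p = (x,y,z)`. -/
def gWalker (f : ℝ × ℝ → ℝ) (p : ℝ × ℝ × ℝ) (u v : ℝ × ℝ × ℝ) : ℝ :=
  -2 * f (p.1, p.2.1) * u.1 * v.1 + u.2.1 * v.2.1 + u.1 * v.2.2 + u.2.2 * v.1

/-- The linear part of the isometry. -/
noncomputable def Lwalk (c1 c3 : ℝ) : (ℝ × ℝ × ℝ) →L[ℝ] (ℝ × ℝ × ℝ) :=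
  (c1 • ContinuousLinearMap.fst ℝ ℝ (ℝ × ℝ)).prod
    ((((ContinuousLinearMap.fst ℝ ℝ ℝ)).comp (ContinuousLinearMap.snd ℝ ℝ (ℝ × ℝ))).prod
      (c3 • ((ContinuousLinearMap.snd ℝ ℝ ℝ)).comp (ContinuousLinearMap.snd ℝ ℝ (ℝ × ℝ))))

@[simp] lemma Lwalk_apply (c1 c3 : ℝ) (u : ℝ × ℝ × ℝ) :
    Lwalk c1 c3 u = (c1 * u.1, u.2.1, c3 * u.2.2) := by
  simp [Lwalk, smul_eq_mul]

theorem stmt5 (a : ℝ) (ha : a ≠ 0) (f : ℝ × ℝ → ℝ)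
    (hf : ∀ q : ℝ × ℝ, f q = Real.exp (a * q.2))
    (x₀ y₀ z₀ ε : ℝ) (hε : ε = 1 ∨ ε = -1)
    (T : ℝ × ℝ × ℝ → ℝ × ℝ × ℝ)
    (hT : ∀ p : ℝ × ℝ × ℝ, T p =
      (ε * Real.exp (-a * y₀ / 2) * p.1 + x₀, p.2.1 + y₀,
        ε * Real.exp (a * y₀ / 2) * p.2.2 + z₀)) :
    ∀ (p u v : ℝ × ℝ × ℝ),
      gWalker f (T p) (fderiv ℝ T p u) (fderiv ℝ T p v) = gWalker f p u v := by
  intro p u v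
  set c1 := ε * Real.exp (-a * y₀ / 2)
  set c3 := ε * Real.exp (a * y₀ / 2)
  have hTeq : T = fun q => Lwalk c1 c3 q + (x₀, y₀, z₀) := by
    funext q
    rw [hT q]
    simp [Prod.ext_iff, c1, c3]
  have hD : fderiv ℝ T p = Lwalk c1 c3 := by
    rw [hTeq]
    exact (((Lwalk c1 c3).hasFDerivAt).add_const (x₀, y₀, z₀)).fderiv
  rw [hD]
  simp only [gWalker, Lwalk_apply, hT p, hf]
  have hB : Real.exp (a * y₀ / 2) ≠ 0 := Real.exp_ne_zero _
  have h1 : Real.exp (-a * y₀ / 2) = (Real.exp (a * y₀ / 2))⁻¹ := by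
    rw [← Real.exp_neg]; ring_nf
  have h2 : Real.exp (a * (p.2.1 + y₀)) =
      Real.exp (a * p.2.1) * Real.exp (a * y₀ / 2) * Real.exp (a * y₀ / 2) := by
    rw [mul_comm, mul_assoc, ← Real.exp_add, ← Real.exp_add]; ring_nf
  simp only [c1, c3, h1, h2]
  rcases hε with h | h <;> subst h <;> field_simp <;> ring
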